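/- Let n ≥ 1 and m ≥ 1 be integers, let T > 0, and let α : ℝ → ℝ be continuous. Define α₁(t) = ∫₀ᵗ α(s) ds and assume α₁(t) > 0 for all t ∈ (0, T]. Then for every fixed x ∈ ℝⁿ and every t ∈ (0, T), the function t ↦ E_{m,α₁(t)}(x) is differentiable at t with derivative −α(t) · ((−1)^m Δ^[m] E_{m,α₁(t)})(x); that is, it solves ∂_t u + α(t)(−Δ)^m u = 0. -/

import Mathlib

open MeasureTheory Real Complex

noncomputable def heatKernel (n m : ℕ) (a : ℝ) (x : EuclideanSpace ℝ (Fin n)) : ℂ :=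
  ((2 * Real.pi) ^ n : ℝ)⁻¹ •
    ∫ s : EuclideanSpace ℝ (Fin n),
      Complex.exp (Complex.I * ((inner ℝ x s : ℝ) : ℂ) - (a : ℂ) * ((‖s‖ : ℝ) : ℂ) ^ (2 * m))

noncomputable def Laplacian' {n : ℕ} {F : Type*} [NormedAddCommGroup F] [NormedSpace ℝ F]
    (f : EuclideanSpace ℝ (Fin n) → F) : EuclideanSpace ℝ (Fin n) → F :=
  fun x => ∑ i : Fin n,
    fderiv ℝ (fun y => fderiv ℝ f y (EuclideanSpace.single i 1)) x (EuclideanSpace.single i 1)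

namespace HeatAux

variable {n m : ℕ}

/-- the phase/decay exponent -/
noncomputable def ph (m : ℕ) (a : ℝ) (x s : EuclideanSpace ℝ (Fin n)) : ℂ :=
  Complex.I * ((inner ℝ x s : ℝ) : ℂ) - (a : ℂ) * ((‖s‖ : ℝ) : ℂ) ^ (2 * m)

/-- weighted oscillatory integral -/
noncomputable def Phi (n m : ℕ) (a : ℝ) (w : EuclideanSpace ℝ (Fin n) → ℂ)
    (x : EuclideanSpace ℝ (Fin n)) : ℂ :=
  ∫ s : EuclideanSpace ℝ (Fin n), w s * Complex.exp (ph m a x s)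

/-- the x-derivative of the phase -/
noncomputable def dph (s : EuclideanSpace ℝ (Fin n)) :
    EuclideanSpace ℝ (Fin n) →L[ℝ] ℂ :=
  Complex.I • (Complex.ofRealCLM.comp (innerSL ℝ s))

/-- polynomially bounded continuous weights -/
def PW (n : ℕ) (w : EuclideanSpace ℝ (Fin n) → ℂ) : Prop :=
  Continuous w ∧ ∃ C d, 0 ≤ C ∧ ∀ s, ‖w s‖ ≤ C * (1 + ‖s‖) ^ d

lemma pow_div_factorial_le_exp {x : ℝ} (hx : 0 ≤ x) (M : ℕ) :
    x ^ M / M.factorial ≤ Real.exp x := by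
  calc x ^ M / M.factorial ≤ ∑ i ∈ Finset.range (M+1), x ^ i / i.factorial := by
        refine Finset.single_le_sum (f := fun i => x ^ i / i.factorial) (fun i _ => by positivity)
          (Finset.self_mem_range_succ M)
    _ ≤ Real.exp x := Real.sum_le_exp_of_nonneg hx _

lemma coord_le_norm (s : EuclideanSpace ℝ (Fin n)) (i : Fin n) : |s i| ≤ ‖s‖ := by
  rw [← Real.sqrt_sq_eq_abs, EuclideanSpace.norm_eq]
  apply Real.sqrt_le_sqrt
  simp only [Real.norm_eq_abs, _root_.sq_abs]
  exact Finset.single_le_sum (f := fun j => s j ^ 2) (fun j _ => sq_nonneg _) (Finset.mem_univ i)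

lemma norm_sq_eq_sum (s : EuclideanSpace ℝ (Fin n)) : ‖s‖ ^ 2 = ∑ i, s i ^ 2 := by
  rw [EuclideanSpace.norm_eq, Real.sq_sqrt (by positivity)]
  simp [_root_.sq_abs]

/-- global bound for polynomial times exponential of a power -/
lemma exp_poly_bound {a : ℝ} (ha : 0 < a) (M : ℕ) (hm : 1 ≤ m) :
    ∃ C : ℝ, 0 ≤ C ∧ ∀ r : ℝ, 0 ≤ r → (1 + r) ^ M * Real.exp (-(a * r ^ (2 * m))) ≤ C := by
  refine ⟨2 ^ M * (1 + M.factorial / a ^ M), by positivity, fun r hr => ?_⟩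
  have hfp : (0:ℝ) ≤ M.factorial / a ^ M := by positivity
  have hexp : Real.exp (-(a * r ^ (2 * m))) ≤ 1 := by
    apply Real.exp_le_one_iff.mpr; simp; positivity
  rcases le_total r 1 with h1 | h1
  · calc (1 + r) ^ M * Real.exp (-(a * r ^ (2 * m)))
        ≤ 2 ^ M * 1 := by
          apply mul_le_mul _ hexp (Real.exp_nonneg _) (by positivity)
          exact pow_le_pow_left₀ (by linarith) (by linarith) M
      _ ≤ 2 ^ M * (1 + M.factorial / a ^ M) := by
          nlinarith [pow_pos (zero_lt_two (α := ℝ)) M]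
  · have hr0 : (0:ℝ) < r := lt_of_lt_of_le one_pos h1
    have hu : 0 < a * r ^ (2 * m) := by positivity
    have hkey : r ^ M * Real.exp (-(a * r ^ (2 * m))) ≤ M.factorial / a ^ M := by
      have h2 := pow_div_factorial_le_exp hu.le M
      have h3 : Real.exp (-(a * r ^ (2 * m))) ≤ M.factorial / (a * r ^ (2 * m)) ^ M := by
        rw [Real.exp_neg, le_div_iff₀ (pow_pos hu M), inv_mul_le_iff₀ (Real.exp_pos _)]
        rw [div_le_iff₀ (by positivity : (0:ℝ) < (M.factorial:ℝ))] at h2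
        linarith
      calc r ^ M * Real.exp (-(a * r ^ (2 * m)))
          ≤ r ^ M * (M.factorial / (a * r ^ (2 * m)) ^ M) :=
            mul_le_mul_of_nonneg_left h3 (by positivity)
        _ = M.factorial / a ^ M * (r ^ M / r ^ (2 * m * M)) := by
            rw [mul_pow, ← pow_mul]; field_simp
        _ ≤ M.factorial / a ^ M * 1 := by
            apply mul_le_mul_of_nonneg_left _ hfp
            rw [div_le_one (by positivity)]
            exact pow_le_pow_right₀ h1 (Nat.le_mul_of_pos_left M (by omega))
        _ = M.factorial / a ^ M := mul_one _
    calc (1 + r) ^ M * Real.exp (-(a * r ^ (2 * m)))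
        ≤ (2 * r) ^ M * Real.exp (-(a * r ^ (2 * m))) := by
          apply mul_le_mul_of_nonneg_right _ (Real.exp_nonneg _)
          exact pow_le_pow_left₀ (by linarith) (by linarith) M
      _ = 2 ^ M * (r ^ M * Real.exp (-(a * r ^ (2 * m)))) := by rw [mul_pow]; ring
      _ ≤ 2 ^ M * (M.factorial / a ^ M) :=
          mul_le_mul_of_nonneg_left hkey (by positivity)
      _ ≤ 2 ^ M * (1 + M.factorial / a ^ M) := by
          nlinarith [pow_pos (zero_lt_two (α := ℝ)) M]

/-- the norm of the oscillatory integrand -/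
lemma norm_exp_ph (a : ℝ) (x s : EuclideanSpace ℝ (Fin n)) :
    ‖Complex.exp (ph m a x s)‖ = Real.exp (-(a * ‖s‖ ^ (2 * m))) := by
  rw [Complex.norm_exp]
  congr 1
  simp [ph, ← Complex.ofReal_pow, Complex.sub_re, Complex.mul_re]

lemma integrable_pow_exp (hm : 1 ≤ m) {a : ℝ} (ha : 0 < a) (k : ℕ) :
    Integrable (fun s : EuclideanSpace ℝ (Fin n) =>
      ‖s‖ ^ k * Real.exp (-(a * ‖s‖ ^ (2 * m)))) := by
  obtain ⟨C, hC0, hC⟩ := exp_poly_bound ha (n + 1 + k) hm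
  have hnr : ((Module.finrank ℝ (EuclideanSpace ℝ (Fin n)) : ℝ)) < ((n + 1 : ℕ) : ℝ) := by
    simp [finrank_euclideanSpace]
  have hint : Integrable (fun s : EuclideanSpace ℝ (Fin n) =>
      C * (1 + ‖s‖) ^ (-((n + 1 : ℕ) : ℝ))) :=
    (integrable_one_add_norm hnr).const_mul C
  refine hint.mono' (Continuous.aestronglyMeasurable (by fun_prop)) (ae_of_all _ fun s => ?_)
  have h1 : (0:ℝ) < 1 + ‖s‖ := by positivity
  rw [Real.norm_of_nonneg (by positivity), Real.rpow_neg h1.le, Real.rpow_natCast,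
    mul_comm C, ← div_eq_inv_mul, le_div_iff₀ (by positivity)]
  calc ‖s‖ ^ k * Real.exp (-(a * ‖s‖ ^ (2 * m))) * (1 + ‖s‖) ^ (n + 1)
      ≤ (1 + ‖s‖) ^ k * Real.exp (-(a * ‖s‖ ^ (2 * m))) * (1 + ‖s‖) ^ (n + 1) := by
        have := norm_nonneg s
        gcongr
        linarith
    _ = (1 + ‖s‖) ^ (n + 1 + k) * Real.exp (-(a * ‖s‖ ^ (2 * m))) := by
        rw [pow_add]; ring
    _ ≤ C := hC _ (norm_nonneg s)

lemma integrable_one_add_pow_exp (hm : 1 ≤ m) {a : ℝ} (ha : 0 < a) (d : ℕ) :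
    Integrable (fun s : EuclideanSpace ℝ (Fin n) =>
      (1 + ‖s‖) ^ d * Real.exp (-(a * ‖s‖ ^ (2 * m)))) := by
  refine (((integrable_pow_exp hm ha 0).add (integrable_pow_exp hm ha d)).const_mul
    (2 ^ d)).mono' (Continuous.aestronglyMeasurable (by fun_prop)) (ae_of_all _ fun s => ?_)
  simp only [Pi.add_apply]
  have he : (0:ℝ) < Real.exp (-(a * ‖s‖ ^ (2 * m))) := Real.exp_pos _
  rw [Real.norm_of_nonneg (by positivity)]
  have h2d : (0:ℝ) < 2 ^ d := pow_pos two_pos d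
  have hnd : (0:ℝ) ≤ ‖s‖ ^ d := pow_nonneg (norm_nonneg s) d
  have hpow : (1 + ‖s‖) ^ d ≤ 2 ^ d * (1 + ‖s‖ ^ d) := by
    rcases le_total ‖s‖ 1 with h1 | h1
    · have h2 : (1 + ‖s‖) ^ d ≤ 2 ^ d := pow_le_pow_left₀ (by positivity) (by linarith) d
      nlinarith
    · have h2 : (1 + ‖s‖) ^ d ≤ (2 * ‖s‖) ^ d := pow_le_pow_left₀ (by positivity) (by linarith) d
      rw [mul_pow] at h2
      nlinarith
  calc (1 + ‖s‖) ^ d * Real.exp (-(a * ‖s‖ ^ (2 * m)))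
      ≤ 2 ^ d * (1 + ‖s‖ ^ d) * Real.exp (-(a * ‖s‖ ^ (2 * m))) := by gcongr
    _ = 2 ^ d * (‖s‖ ^ 0 * Real.exp (-(a * ‖s‖ ^ (2 * m)))
          + ‖s‖ ^ d * Real.exp (-(a * ‖s‖ ^ (2 * m)))) := by ring

/-- dominated integrability -/
lemma integrable_dom {F : Type*} [NormedAddCommGroup F] (hm : 1 ≤ m) {a : ℝ} (ha : 0 < a)
    {g : EuclideanSpace ℝ (Fin n) → F} (hg : AEStronglyMeasurable g volume) (C : ℝ) (d : ℕ)
    (hb : ∀ s, ‖g s‖ ≤ C * ((1 + ‖s‖) ^ d * Real.exp (-(a * ‖s‖ ^ (2 * m))))) :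
    Integrable g := by
  refine Integrable.mono' ((integrable_one_add_pow_exp hm ha d).const_mul C) hg ?_
  exact ae_of_all _ hb

lemma continuous_ph (a : ℝ) (x : EuclideanSpace ℝ (Fin n)) :
    Continuous (fun s => ph m a x s) := by
  unfold ph
  have h1 : Continuous fun s : EuclideanSpace ℝ (Fin n) => (inner ℝ x s : ℝ) :=
    (innerSL ℝ x).continuous
  exact (continuous_const.mul (Complex.continuous_ofReal.comp h1)).sub
    (continuous_const.mul ((Complex.continuous_ofReal.comp continuous_norm).pow _))

lemma dph_apply (s v : EuclideanSpace ℝ (Fin n)) :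
    dph s v = Complex.I * ((inner ℝ s v : ℝ) : ℂ) := by
  simp [dph]

lemma norm_dph_apply_le (s v : EuclideanSpace ℝ (Fin n)) : ‖dph s v‖ ≤ ‖s‖ * ‖v‖ := by
  rw [dph_apply, norm_mul, Complex.norm_I, one_mul, Complex.norm_real, Real.norm_eq_abs]
  exact abs_real_inner_le_norm s v

lemma norm_smul_dph_le (c : ℂ) (s : EuclideanSpace ℝ (Fin n)) : ‖c • dph s‖ ≤ ‖c‖ * ‖s‖ := by
  refine ContinuousLinearMap.opNorm_le_bound _ (by positivity) fun v => ?_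
  rw [ContinuousLinearMap.smul_apply, norm_smul]
  rw [mul_assoc]
  gcongr
  exact norm_dph_apply_le s v

lemma continuous_dph : Continuous (fun s : EuclideanSpace ℝ (Fin n) => dph s) := by
  unfold dph
  exact (continuous_const : Continuous fun _ : EuclideanSpace ℝ (Fin n) => Complex.I).smul
    ((ContinuousLinearMap.compL ℝ (EuclideanSpace ℝ (Fin n)) ℝ ℂ Complex.ofRealCLM).continuous.comp
      (innerSL ℝ).continuous)

lemma dph_apply_single (s : EuclideanSpace ℝ (Fin n)) (i : Fin n) :
    dph s (EuclideanSpace.single i 1) = Complex.I * ((s i : ℝ) : ℂ) := by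
  simp [dph, EuclideanSpace.inner_single_right]

/-- pointwise x-derivative of the integrand -/
lemma hasFDerivAt_integrand (a : ℝ) (w : EuclideanSpace ℝ (Fin n) → ℂ)
    (s y : EuclideanSpace ℝ (Fin n)) :
    HasFDerivAt (fun x => w s * Complex.exp (ph m a x s))
      ((w s * Complex.exp (ph m a y s)) • dph s) y := by
  have h0 : HasFDerivAt (fun x : EuclideanSpace ℝ (Fin n) => (inner ℝ x s : ℝ)) (innerSL ℝ s) y := by
    have := (innerSL ℝ s).hasFDerivAt (x := y)
    convert this using 2 with x
    exact (real_inner_comm x s).symm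
  have h1 : HasFDerivAt (fun x : EuclideanSpace ℝ (Fin n) => ((inner ℝ x s : ℝ) : ℂ))
      (Complex.ofRealCLM.comp (innerSL ℝ s)) y := Complex.ofRealCLM.hasFDerivAt.comp y h0
  have h2 := (h1.const_mul Complex.I).sub_const ((a : ℂ) * ((‖s‖ : ℝ) : ℂ) ^ (2 * m))
  have h4 := h2.cexp.const_mul (w s)
  have hD : (w s * Complex.exp (ph m a y s)) • dph s =
      w s • Complex.exp (ph m a y s) •
        (Complex.I • (Complex.ofRealCLM.comp (innerSL ℝ s))) := by
    simp only [dph, smul_smul]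
    congr 1
    ring
  rw [hD]
  exact h4

/-- integrability of the integrand and of its derivative, for PW weights -/
lemma integrable_integrand (hm : 1 ≤ m) {a : ℝ} (ha : 0 < a) {w} (hw : PW n w)
    (x : EuclideanSpace ℝ (Fin n)) :
    Integrable (fun s => w s * Complex.exp (ph m a x s)) := by
  obtain ⟨hwc, C, d, hC0, hC⟩ := hw
  refine integrable_dom hm ha (Continuous.aestronglyMeasurable ?_) C d (fun s => ?_)
  · exact hwc.mul (Complex.continuous_exp.comp (continuous_ph a x))
  · rw [norm_mul, norm_exp_ph]
    calc ‖w s‖ * Real.exp (-(a * ‖s‖ ^ (2 * m)))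
        ≤ (C * (1 + ‖s‖) ^ d) * Real.exp (-(a * ‖s‖ ^ (2 * m))) := by
          gcongr
          exact hC s
      _ = C * ((1 + ‖s‖) ^ d * Real.exp (-(a * ‖s‖ ^ (2 * m)))) := by ring

lemma bound_deriv {a : ℝ} {w : EuclideanSpace ℝ (Fin n) → ℂ} {C : ℝ} {d : ℕ}
    (hC0 : 0 ≤ C) (hC : ∀ s, ‖w s‖ ≤ C * (1 + ‖s‖) ^ d) (y s : EuclideanSpace ℝ (Fin n)) :
    ‖(w s * Complex.exp (ph m a y s)) • dph s‖ ≤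
      C * ((1 + ‖s‖) ^ (d + 1) * Real.exp (-(a * ‖s‖ ^ (2 * m)))) := by
  calc ‖(w s * Complex.exp (ph m a y s)) • dph s‖
      ≤ ‖w s * Complex.exp (ph m a y s)‖ * ‖s‖ := norm_smul_dph_le _ s
    _ = ‖w s‖ * Real.exp (-(a * ‖s‖ ^ (2 * m))) * ‖s‖ := by rw [norm_mul, norm_exp_ph]
    _ ≤ (C * (1 + ‖s‖) ^ d) * Real.exp (-(a * ‖s‖ ^ (2 * m))) * (1 + ‖s‖) := by
        refine mul_le_mul (mul_le_mul_of_nonneg_right (hC s) (Real.exp_nonneg _))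
          (by linarith [norm_nonneg s]) (norm_nonneg s) (by positivity)
    _ = C * ((1 + ‖s‖) ^ (d + 1) * Real.exp (-(a * ‖s‖ ^ (2 * m)))) := by
        rw [pow_succ]; ring

lemma integrable_integrand_deriv (hm : 1 ≤ m) {a : ℝ} (ha : 0 < a) {w} (hw : PW n w)
    (x : EuclideanSpace ℝ (Fin n)) :
    Integrable (fun s => (w s * Complex.exp (ph m a x s)) • dph s) := by
  obtain ⟨hwc, C, d, hC0, hC⟩ := hw
  refine integrable_dom hm ha (Continuous.aestronglyMeasurable ?_) C (d + 1) (fun s => ?_)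
  · exact (hwc.mul (Complex.continuous_exp.comp (continuous_ph a x))).smul continuous_dph
  · exact bound_deriv hC0 hC x s

/-- differentiation under the integral sign in x -/
lemma hasFDerivAt_Phi (hm : 1 ≤ m) {a : ℝ} (ha : 0 < a) {w} (hw : PW n w)
    (x : EuclideanSpace ℝ (Fin n)) :
    HasFDerivAt (Phi n m a w)
      (∫ s, (w s * Complex.exp (ph m a x s)) • dph s) x := by
  obtain ⟨hwc, C, d, hC0, hC⟩ := hw
  refine hasFDerivAt_integral_of_dominated_of_fderiv_le (s := Metric.ball x 1)
    (bound := fun s => C * ((1 + ‖s‖) ^ (d + 1) * Real.exp (-(a * ‖s‖ ^ (2 * m))))) (Metric.ball_mem_nhds x one_pos)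
    (Filter.Eventually.of_forall fun y => Continuous.aestronglyMeasurable
      (hwc.mul (Complex.continuous_exp.comp (continuous_ph a y))))
    (integrable_integrand hm ha ⟨hwc, C, d, hC0, hC⟩ x)
    ((integrable_integrand_deriv hm ha ⟨hwc, C, d, hC0, hC⟩ x).aestronglyMeasurable)
    (ae_of_all _ fun s y _ => bound_deriv hC0 hC y s)
    ((integrable_one_add_pow_exp hm ha (d + 1)).const_mul C)
    (ae_of_all _ fun s y _ => hasFDerivAt_integrand a w s y)

/-- the directional derivative of `Phi` -/
lemma fderiv_Phi_apply (hm : 1 ≤ m) {a : ℝ} (ha : 0 < a) {w} (hw : PW n w)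
    (x : EuclideanSpace ℝ (Fin n)) (i : Fin n) :
    fderiv ℝ (Phi n m a w) x (EuclideanSpace.single i 1) =
      Phi n m a (fun s => Complex.I * ((s i : ℝ) : ℂ) * w s) x := by
  rw [(hasFDerivAt_Phi hm ha hw x).fderiv]
  rw [ContinuousLinearMap.integral_apply (integrable_integrand_deriv hm ha hw x)]
  unfold Phi
  congr 1
  funext s
  rw [ContinuousLinearMap.smul_apply, dph_apply_single, smul_eq_mul]
  ring

/-- PW closure properties -/
lemma PW_const (c : ℂ) : PW n (fun _ => c) :=
  ⟨continuous_const, ‖c‖, 0, norm_nonneg c, fun s => by simp⟩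

lemma PW_coord {w} (hw : PW n w) (i : Fin n) :
    PW n (fun s => Complex.I * ((s i : ℝ) : ℂ) * w s) := by
  obtain ⟨hwc, C, d, hC0, hC⟩ := hw
  refine ⟨?_, C, d + 1, hC0, fun s => ?_⟩
  · exact (continuous_const.mul (Complex.continuous_ofReal.comp
      (EuclideanSpace.proj i).continuous)).mul hwc
  · rw [norm_mul, norm_mul, Complex.norm_I, one_mul, Complex.norm_real, Real.norm_eq_abs]
    calc |s i| * ‖w s‖ ≤ (1 + ‖s‖) * (C * (1 + ‖s‖) ^ d) := by
          apply mul_le_mul _ (hC s) (norm_nonneg _) (by positivity)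
          linarith [coord_le_norm s i, abs_nonneg (s i)]
      _ = C * (1 + ‖s‖) ^ (d + 1) := by rw [pow_succ]; ring

lemma PW_negsq_pow {w} (hw : PW n w) (k : ℕ) :
    PW n (fun s => (-(((‖s‖ : ℝ) : ℂ) ^ 2)) ^ k * w s) := by
  obtain ⟨hwc, C, d, hC0, hC⟩ := hw
  refine ⟨?_, C, d + 2 * k, hC0, fun s => ?_⟩
  · fun_prop
  · rw [norm_mul, norm_pow, norm_neg, norm_pow, Complex.norm_real, Real.norm_eq_abs,
      abs_norm]
    calc (‖s‖ ^ 2) ^ k * ‖w s‖ ≤ ((1 + ‖s‖) ^ 2) ^ k * (C * (1 + ‖s‖) ^ d) := by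
          apply mul_le_mul _ (hC s) (norm_nonneg _) (by positivity)
          gcongr
          linarith [norm_nonneg s]
      _ = C * (1 + ‖s‖) ^ (d + 2 * k) := by
          rw [← pow_mul, pow_add]; ring

/-- the Laplacian' of `Phi` -/
lemma laplacian_Phi (hm : 1 ≤ m) {a : ℝ} (ha : 0 < a) {w} (hw : PW n w) :
    Laplacian' (Phi n m a w) = Phi n m a (fun s => (-(((‖s‖ : ℝ) : ℂ) ^ 2)) * w s) := by
  funext x
  unfold Laplacian'
  have step : ∀ i : Fin n,
      fderiv ℝ (fun y => fderiv ℝ (Phi n m a w) y (EuclideanSpace.single i 1)) x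
        (EuclideanSpace.single i 1) =
      Phi n m a (fun s => Complex.I * ((s i : ℝ) : ℂ) *
        (Complex.I * ((s i : ℝ) : ℂ) * w s)) x := by
    intro i
    have h1 : (fun y => fderiv ℝ (Phi n m a w) y (EuclideanSpace.single i 1)) =
        Phi n m a (fun s => Complex.I * ((s i : ℝ) : ℂ) * w s) := by
      funext y
      exact fderiv_Phi_apply hm ha hw y i
    rw [h1, fderiv_Phi_apply hm ha (PW_coord hw i) x i]
  simp only [step]
  unfold Phi
  rw [← integral_finset_sum _ (fun i _ =>
    integrable_integrand hm ha (PW_coord (PW_coord hw i) i) x)]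
  congr 1
  funext s
  rw [← Finset.sum_mul]
  congr 1
  have hc : ((‖s‖ : ℝ) : ℂ) ^ 2 = ∑ i : Fin n, ((s i : ℝ) : ℂ) ^ 2 := by
    rw [← Complex.ofReal_pow, norm_sq_eq_sum]
    push_cast
    rfl
  calc ∑ i : Fin n, Complex.I * ((s i : ℝ) : ℂ) * (Complex.I * ((s i : ℝ) : ℂ) * w s)
      = ∑ i : Fin n, -(((s i : ℝ) : ℂ) ^ 2) * w s := by
        refine Finset.sum_congr rfl fun i _ => ?_
        linear_combination (((s i : ℝ) : ℂ) ^ 2 * w s) * Complex.I_sq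
    _ = (∑ i : Fin n, -(((s i : ℝ) : ℂ) ^ 2)) * w s := by rw [Finset.sum_mul]
    _ = -(((‖s‖ : ℝ) : ℂ) ^ 2) * w s := by rw [Finset.sum_neg_distrib, ← hc]


/-- iterated Laplacian' of `Phi` -/
lemma laplacian_iter (hm : 1 ≤ m) {a : ℝ} (ha : 0 < a) {w} (hw : PW n w) (k : ℕ) :
    Laplacian'^[k] (Phi n m a w) =
      Phi n m a (fun s => (-(((‖s‖ : ℝ) : ℂ) ^ 2)) ^ k * w s) := by
  induction k with
  | zero => simp only [Function.iterate_zero, id_eq, pow_zero, one_mul]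
  | succ k ih =>
      rw [Function.iterate_succ_apply', ih, laplacian_Phi hm ha (PW_negsq_pow hw k)]
      have hfun : (fun s : EuclideanSpace ℝ (Fin n) =>
          -(((‖s‖ : ℝ) : ℂ) ^ 2) * ((-(((‖s‖ : ℝ) : ℂ) ^ 2)) ^ k * w s)) =
          fun s => (-(((‖s‖ : ℝ) : ℂ) ^ 2)) ^ (k + 1) * w s := by
        funext s
        rw [pow_succ]
        ring
      rw [hfun]

/-- differentiation in the time parameter -/
lemma hasDerivAt_Phi_a (hm : 1 ≤ m) {a : ℝ} (ha : 0 < a) {w} (hw : PW n w)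
    (x : EuclideanSpace ℝ (Fin n)) :
    HasDerivAt (fun b : ℝ => Phi n m b w x)
      (Phi n m a (fun s => -(((‖s‖ : ℝ) : ℂ) ^ (2 * m)) * w s) x) a := by
  obtain ⟨hwc, C, d, hC0, hC⟩ := hw
  have ha2 : 0 < a / 2 := by linarith
  have hbound : ∀ (s : EuclideanSpace ℝ (Fin n)) (b : ℝ), b ∈ Metric.ball a (a / 2) →
      ‖-(((‖s‖ : ℝ) : ℂ) ^ (2 * m)) * (w s * Complex.exp (ph m b x s))‖ ≤
        C * ((1 + ‖s‖) ^ (d + 2 * m) * Real.exp (-(a / 2 * ‖s‖ ^ (2 * m)))) := by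
    intro s b hb
    have hb2 : a / 2 ≤ b := by
      rw [Metric.mem_ball, Real.dist_eq, abs_lt] at hb
      linarith [hb.1, hb.2]
    rw [norm_mul, norm_neg, norm_pow, Complex.norm_real, Real.norm_eq_abs, abs_norm,
      norm_mul, norm_exp_ph]
    calc ‖s‖ ^ (2 * m) * (‖w s‖ * Real.exp (-(b * ‖s‖ ^ (2 * m))))
        ≤ (1 + ‖s‖) ^ (2 * m) * ((C * (1 + ‖s‖) ^ d) * Real.exp (-(a / 2 * ‖s‖ ^ (2 * m)))) := by
          refine mul_le_mul (by gcongr; linarith [norm_nonneg s]) ?_ (by positivity) (by positivity)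
          refine mul_le_mul (hC s) (Real.exp_le_exp.mpr ?_) (Real.exp_nonneg _) (by positivity)
          have h5 : a / 2 * ‖s‖ ^ (2 * m) ≤ b * ‖s‖ ^ (2 * m) :=
            mul_le_mul_of_nonneg_right hb2 (by positivity)
          linarith
      _ = C * ((1 + ‖s‖) ^ (d + 2 * m) * Real.exp (-(a / 2 * ‖s‖ ^ (2 * m)))) := by
          rw [pow_add]; ring
  have hdiff : ∀ (s : EuclideanSpace ℝ (Fin n)) (b : ℝ),
      HasDerivAt (fun b : ℝ => w s * Complex.exp (ph m b x s))
        (-(((‖s‖ : ℝ) : ℂ) ^ (2 * m)) * (w s * Complex.exp (ph m b x s))) b := by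
    intro s b
    have h0 : HasDerivAt (fun b : ℝ => ((b : ℝ) : ℂ)) 1 b := by
      simpa using (hasDerivAt_id b).ofReal_comp
    have h4 := (((h0.mul_const (((‖s‖ : ℝ) : ℂ) ^ (2 * m))).const_sub
      (Complex.I * ((inner ℝ x s : ℝ) : ℂ))).cexp).const_mul (w s)
    refine h4.congr_deriv ?_
    simp only [ph]
    ring
  have key := hasDerivAt_integral_of_dominated_loc_of_deriv_le (s := Metric.ball a (a / 2)) (μ := volume)
    (F := fun (b : ℝ) s => w s * Complex.exp (ph m b x s))
    (F' := fun (b : ℝ) s => -(((‖s‖ : ℝ) : ℂ) ^ (2 * m)) * (w s * Complex.exp (ph m b x s)))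
    (bound := fun s => C * ((1 + ‖s‖) ^ (d + 2 * m) * Real.exp (-(a / 2 * ‖s‖ ^ (2 * m)))))
    (Metric.ball_mem_nhds a ha2)
    (Filter.Eventually.of_forall fun b => Continuous.aestronglyMeasurable
      (hwc.mul (Complex.continuous_exp.comp (continuous_ph b x))))
    (integrable_integrand hm ha ⟨hwc, C, d, hC0, hC⟩ x)
    (Continuous.aestronglyMeasurable (by
      refine Continuous.mul ?_ (hwc.mul (Complex.continuous_exp.comp (continuous_ph a x)))
      exact ((Complex.continuous_ofReal.comp continuous_norm).pow _).neg))
    (ae_of_all _ fun s b hb => hbound s b hb)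
    ((integrable_one_add_pow_exp hm ha2 (d + 2 * m)).const_mul C)
    (ae_of_all _ fun s b _ => hdiff s b)
  refine key.2.congr_deriv ?_
  unfold Phi
  congr 1
  funext s
  ring

/-- `heatKernel` as a `Phi` -/
lemma heatKernel_eq_Phi (n m : ℕ) (a : ℝ) :
    heatKernel n m a = Phi n m a (fun _ => ((((2 * Real.pi) ^ n : ℝ)⁻¹ : ℝ) : ℂ)) := by
  funext x
  unfold heatKernel Phi ph
  rw [← integral_smul]
  congr 1

end HeatAux

theorem heatKernel_time_dependent_solution (n m : ℕ) (hn : 1 ≤ n) (hm : 1 ≤ m)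
    (T : ℝ) (hT : 0 < T) (α : ℝ → ℝ) (hα : Continuous α)
    (α₁ : ℝ → ℝ) (hα₁ : ∀ t, α₁ t = ∫ s in (0 : ℝ)..t, α s)
    (hpos : ∀ t ∈ Set.Ioc (0 : ℝ) T, 0 < α₁ t)
    (x : EuclideanSpace ℝ (Fin n)) :
    ∀ t ∈ Set.Ioo (0 : ℝ) T,
      HasDerivAt (fun τ : ℝ => heatKernel n m (α₁ τ) x)
        (-(α t) • ((-1 : ℂ) ^ m * (Laplacian'^[m] (heatKernel n m (α₁ t))) x)) t := by
  intro t ht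
  have hapos : 0 < α₁ t := hpos t ⟨ht.1, ht.2.le⟩
  set w₀ : EuclideanSpace ℝ (Fin n) → ℂ :=
    fun _ => ((((2 * Real.pi) ^ n : ℝ)⁻¹ : ℝ) : ℂ) with hw₀def
  have hw₀ : HeatAux.PW n w₀ := HeatAux.PW_const _
  have hK : ∀ b : ℝ, heatKernel n m b = HeatAux.Phi n m b w₀ := fun b =>
    HeatAux.heatKernel_eq_Phi n m b
  -- FTC
  have hft : HasDerivAt α₁ (α t) t := by
    have hfe : α₁ = fun u => ∫ s in (0 : ℝ)..u, α s := funext hα₁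
    rw [hfe]
    exact intervalIntegral.integral_hasDerivAt_right (hα.intervalIntegrable _ _)
      (hα.stronglyMeasurableAtFilter _ _) hα.continuousAt
  -- derivative in the parameter
  have hG := HeatAux.hasDerivAt_Phi_a (n := n) hm hapos hw₀ x
  have hcomp := hG.scomp t hft
  -- identify the Laplacian' iterate
  have hiter : Laplacian'^[m] (heatKernel n m (α₁ t)) =
      HeatAux.Phi n m (α₁ t) (fun s => (-(((‖s‖ : ℝ) : ℂ) ^ 2)) ^ m * w₀ s) := by
    rw [hK (α₁ t)]
    exact HeatAux.laplacian_iter hm hapos hw₀ m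
  have hval : HeatAux.Phi n m (α₁ t) (fun s => -(((‖s‖ : ℝ) : ℂ) ^ (2 * m)) * w₀ s) x =
      -((-1 : ℂ) ^ m *
        HeatAux.Phi n m (α₁ t) (fun s => (-(((‖s‖ : ℝ) : ℂ) ^ 2)) ^ m * w₀ s) x) := by
    unfold HeatAux.Phi
    rw [← integral_const_mul, ← integral_neg]
    congr 1
    funext s
    have h1 : ((-1 : ℂ)) ^ m * ((-1 : ℂ)) ^ m = 1 := by
      rw [← mul_pow]
      norm_num
    beta_reduce
    rw [pow_mul, neg_pow]
    linear_combination ((((‖s‖ : ℝ) : ℂ) ^ 2) ^ m * w₀ s *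
      Complex.exp (HeatAux.ph m (α₁ t) x s)) * h1
  have hfun : (fun τ : ℝ => heatKernel n m (α₁ τ) x) =
      fun τ : ℝ => HeatAux.Phi n m (α₁ τ) w₀ x := by
    funext τ
    rw [hK (α₁ τ)]
  rw [hfun, hiter]
  refine hcomp.congr_deriv ?_
  rw [hval]
  rw [smul_neg, ← neg_smul]
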